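/- Let E be a real Banach space, let (f_k)_{k≥0} be a sequence in E whose power series Σ_k f_k x^k has radius of convergence R, and let 0 < s < R. Define F(θ) = Σ_{k≥0} f_k θ^k for |θ| < R. Let t be a positive integer and M ≥ 0 be such that the t-th derivative of the map θ ↦ F(s·θ) has norm at most M at every point of [0,1]. Then ‖Σ_{k ≥ t} f_k s^k‖ ≤ M / t!. -/

import Mathlib

open Filter Set

section Helpers

variable {E : Type*} [NormedAddCommGroup E] [NormedSpace ℝ E]

lemma sparsto_iteratedDeriv_zero_fun (n : ℕ) :
    iteratedDeriv n (fun _ : ℝ => (0 : E)) = fun _ => 0 := by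
  induction n with
  | zero => simp [iteratedDeriv_zero]
  | succ n ih =>
    rw [iteratedDeriv_succ']
    have : deriv (fun _ : ℝ => (0 : E)) = fun _ : ℝ => (0 : E) := by
      funext x; simp
    rw [this]; exact ih

lemma sparsto_iteratedDeriv_monomial :
    ∀ (i n : ℕ) (c : E), i < n →
      iteratedDeriv n (fun x : ℝ => x ^ i • c) = fun _ => 0 := by
  intro i
  induction i with
  | zero =>
    intro n c hn
    obtain ⟨m, rfl⟩ := Nat.exists_eq_succ_of_ne_zero hn.ne'
    rw [iteratedDeriv_succ']
    have : deriv (fun x : ℝ => x ^ 0 • c) = fun _ : ℝ => (0 : E) := by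
      funext x; simp
    rw [this]; exact sparsto_iteratedDeriv_zero_fun m
  | succ i ih =>
    intro n c hn
    obtain ⟨m, rfl⟩ :=
      Nat.exists_eq_succ_of_ne_zero (Nat.lt_of_le_of_lt (Nat.zero_le _) hn).ne'
    rw [iteratedDeriv_succ']
    have hd : deriv (fun x : ℝ => x ^ (i + 1) • c)
        = fun x : ℝ => x ^ i • (((i + 1 : ℕ) : ℝ) • c) := by
      funext x
      rw [((hasDerivAt_pow (i + 1) x).smul_const c).deriv]
      rw [smul_smul, mul_comm]
      norm_num
    rw [hd]
    exact ih m _ (Nat.lt_of_succ_lt_succ hn)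

lemma sparsto_iteratedDeriv_add (n : ℕ) (f g : ℝ → E)
    (hf : ContDiff ℝ n f) (hg : ContDiff ℝ n g) :
    iteratedDeriv n (fun x => f x + g x) = fun x => iteratedDeriv n f x + iteratedDeriv n g x := by
  funext x
  rw [← iteratedDerivWithin_univ, ← iteratedDerivWithin_univ, ← iteratedDerivWithin_univ]
  exact iteratedDerivWithin_add (Set.mem_univ x) uniqueDiffOn_univ hf.contDiffWithinAt hg.contDiffWithinAt

lemma sparsto_iteratedDeriv_poly (a : ℕ → E) :
    ∀ (T n : ℕ), T ≤ n →
      iteratedDeriv n (fun x : ℝ => ∑ j ∈ Finset.range T, x ^ j • a j) = fun _ => 0 := by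
  intro T
  induction T with
  | zero =>
    intro n _
    have : (fun x : ℝ => ∑ j ∈ Finset.range 0, x ^ j • a j) = fun _ : ℝ => (0 : E) := by
      funext x; simp
    rw [this]; exact sparsto_iteratedDeriv_zero_fun n
  | succ T ih =>
    intro n hn
    have hrw : (fun x : ℝ => ∑ j ∈ Finset.range (T + 1), x ^ j • a j)
        = fun x : ℝ => (∑ j ∈ Finset.range T, x ^ j • a j) + x ^ T • a T := by
      funext x; rw [Finset.sum_range_succ]
    have hC1 : ContDiff ℝ n (fun x : ℝ => ∑ j ∈ Finset.range T, x ^ j • a j) :=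
      ContDiff.sum fun j _ => (contDiff_id.pow j).smul contDiff_const
    have hC2 : ContDiff ℝ n (fun x : ℝ => x ^ T • a T) :=
      (contDiff_id.pow T).smul contDiff_const
    rw [hrw, sparsto_iteratedDeriv_add n _ _ hC1 hC2,
      ih n (Nat.le_of_succ_le hn), sparsto_iteratedDeriv_monomial T n (a T) hn]
    funext x; simp

lemma sparsto_iteratedDerivWithin_of_isOpen {s : Set ℝ} (hs : IsOpen s) {x : ℝ} (hx : x ∈ s)
    (n : ℕ) (f : ℝ → E) : iteratedDerivWithin n f s x = iteratedDeriv n f x := by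
  rw [iteratedDerivWithin_eq_iteratedFDerivWithin, iteratedDeriv_eq_iteratedFDeriv,
    iteratedFDerivWithin_of_isOpen n hs hx]

/-- The key "integrate the bound `t` times" lemma. -/
lemma sparsto_key {U : Set ℝ} (hU : IsOpen U) (hIcc : Set.Icc (0 : ℝ) 1 ⊆ U) (M : ℝ) :
    ∀ (t : ℕ) (h : ℝ → E), ContDiffOn ℝ t h U →
      (∀ j, j < t → iteratedDeriv j h 0 = 0) →
      (∀ x ∈ Set.Icc (0 : ℝ) 1, ‖iteratedDeriv t h x‖ ≤ M) →
      ∀ x ∈ Set.Icc (0 : ℝ) 1, ‖h x‖ ≤ M / t.factorial * x ^ t := by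
  intro t
  induction t with
  | zero => intro h _ _ hb x hx; simpa using hb x hx
  | succ t ih =>
    intro h hsm hzero hb
    have hdiff : ∀ x ∈ Set.Icc (0 : ℝ) 1, HasDerivAt h (deriv h x) x := by
      intro x hx
      have hD : DifferentiableOn ℝ h U :=
        hsm.differentiableOn (by simp)
      exact ((hD x (hIcc hx)).differentiableAt (hU.mem_nhds (hIcc hx))).hasDerivAt
    have hd' : ContDiffOn ℝ t (deriv h) U :=
      hsm.deriv_of_isOpen hU (by norm_cast)
    have hz' : ∀ j, j < t → iteratedDeriv j (deriv h) 0 = 0 := by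
      intro j hj
      rw [← iteratedDeriv_succ']
      exact hzero (j + 1) (Nat.succ_lt_succ hj)
    have hb' : ∀ x ∈ Set.Icc (0 : ℝ) 1, ‖iteratedDeriv t (deriv h) x‖ ≤ M := by
      intro x hx
      rw [← iteratedDeriv_succ']
      exact hb x hx
    have IH := ih (deriv h) hd' hz' hb'
    have hB : ∀ x : ℝ, HasDerivAt (fun y : ℝ => M / (t + 1).factorial * y ^ (t + 1))
        (M / t.factorial * x ^ t) x := by
      intro x
      have h1 := (hasDerivAt_pow (t + 1) x).const_mul (M / ((t + 1).factorial : ℝ))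
      refine h1.congr_deriv ?_
      have hfac : ((t + 1).factorial : ℝ) = (t + 1) * t.factorial := by
        exact_mod_cast Nat.factorial_succ t
      have hne : (t.factorial : ℝ) ≠ 0 := by exact_mod_cast t.factorial_ne_zero
      rw [hfac]
      simp only [Nat.add_sub_cancel, Nat.cast_add, Nat.cast_one]
      field_simp
    have h00 : h 0 = 0 := by
      have := hzero 0 (Nat.succ_pos t)
      rwa [iteratedDeriv_zero] at this
    have main := image_norm_le_of_norm_deriv_right_le_deriv_boundary
      (f := h) (f' := deriv h) (a := 0) (b := 1)
      (hsm.continuousOn.mono hIcc)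
      (fun x hx => (hdiff x (Ico_subset_Icc_self hx)).hasDerivWithinAt)
      (by simp [h00])
      hB
      (fun x hx => IH x (Ico_subset_Icc_self hx))
    intro x hx
    exact main hx

end Helpers

/-- The tail bound derived from Lemma 2: if the `t`-th derivative of `θ ↦ F(s·θ)`
is uniformly bounded by `M` on `[0,1]`, then `‖Σ_{k ≥ t} f_k s^k‖ ≤ M / t!`. -/
theorem stmt_6 {E : Type*} [NormedAddCommGroup E] [NormedSpace ℝ E] [CompleteSpace E]
    (f : ℕ → E) (R : ℝ)
    (hconv : ∀ x : ℝ, |x| < R → Summable fun k : ℕ => x ^ k • f k)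
    (F : ℝ → E) (hF : ∀ θ : ℝ, |θ| < R → F θ = ∑' k : ℕ, θ ^ k • f k)
    (s : ℝ) (hs : 0 < s) (hsR : s < R)
    (t : ℕ) (ht : 0 < t) (M : ℝ) (hM : 0 ≤ M)
    (hbound : ∀ θ ∈ Set.Icc (0 : ℝ) 1,
      ‖iteratedDeriv t (fun θ' => F (s * θ')) θ‖ ≤ M) :
    ‖∑' k : ℕ, s ^ (k + t) • f (k + t)‖ ≤ M / t.factorial := by
  classical
  set a : ℕ → E := fun n => s ^ n • f n with ha
  have hRs : 1 < R / s := (one_lt_div hs).2 hsR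
  set r1 : ℝ := (1 + R / s) / 2 with hr1
  have h1r1 : 1 < r1 := by rw [hr1]; linarith
  have hr1R : r1 < R / s := by rw [hr1]; linarith
  have hr1pos : 0 < r1 := by linarith
  -- summability of `x ^ k • a k` for `|x| < R / s`
  have hsum : ∀ x : ℝ, |x| < R / s → Summable fun k : ℕ => x ^ k • a k := by
    intro x hx
    have hx' : |s * x| < R := by
      rw [abs_mul, abs_of_pos hs]
      calc s * |x| < s * (R / s) := by exact (mul_lt_mul_iff_right₀ hs).2 hx
        _ = R := by field_simp
    refine (hconv (s * x) hx').congr fun k => ?_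
    rw [ha, mul_pow, smul_smul, mul_comm]
  set c : ℕ → E := fun n => if t ≤ n then a n else 0 with hc
  have hsumc : ∀ x : ℝ, |x| < R / s → Summable fun k : ℕ => x ^ k • c k := by
    intro x hx
    have h2 : Summable fun k : ℕ => x ^ (k + t) • a (k + t) :=
      (summable_nat_add_iff (f := fun k : ℕ => x ^ k • a k) t).2 (hsum x hx)
    have h3 : Summable fun k : ℕ => x ^ (k + t) • c (k + t) := by
      refine h2.congr fun k => ?_
      rw [hc]; simp [Nat.le_add_left]
    exact (summable_nat_add_iff (f := fun k : ℕ => x ^ k • c k) t).1 h3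
  set h : ℝ → E := fun θ => ∑' k : ℕ, θ ^ (k + t) • a (k + t) with hh
  set rS : FormalMultilinearSeries ℝ ℝ E :=
    fun n => ContinuousMultilinearMap.mkPiRing ℝ (Fin n) (c n) with hrS
  -- radius of rS is at least r1
  have hradius : ENNReal.ofReal r1 ≤ rS.radius := by
    have hs1 : Summable fun n : ℕ => r1 ^ n • a n := hsum r1 (by rwa [abs_of_pos hr1pos])
    have h2 : Tendsto (fun n : ℕ => ‖r1 ^ n • a n‖) atTop (nhds 0) := by
      simpa using hs1.tendsto_atTop_zero.norm
    obtain ⟨C, hC⟩ := h2.bddAbove_range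
    have hbd : ∀ n : ℕ, ‖rS n‖ * ((r1.toNNReal : ℝ)) ^ n ≤ C := by
      intro n
      have hcoe : ((r1.toNNReal : ℝ)) = r1 := Real.coe_toNNReal _ hr1pos.le
      rw [hcoe, hrS]
      have hnorm : ‖ContinuousMultilinearMap.mkPiRing ℝ (Fin n) (c n)‖ = ‖c n‖ :=
        ContinuousMultilinearMap.norm_mkPiRing (c n)
      rw [hnorm]
      have h1 : ‖c n‖ ≤ ‖a n‖ := by
        rw [hc]
        by_cases hcase : t ≤ n <;> simp [hcase]
      calc ‖c n‖ * r1 ^ n ≤ ‖a n‖ * r1 ^ n :=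
            mul_le_mul_of_nonneg_right h1 (pow_nonneg hr1pos.le n)
        _ = ‖r1 ^ n • a n‖ := by
            rw [norm_smul (r1 ^ n) (a n), Real.norm_eq_abs, abs_pow, abs_of_pos hr1pos, mul_comm]
        _ ≤ C := hC ⟨n, rfl⟩
    have hle := rS.le_radius_of_bound C hbd
    have : ENNReal.ofReal r1 = (r1.toNNReal : ENNReal) := rfl
    rw [this]
    exact hle
  -- h has rS as power series on the ball of radius r1
  have hball : HasFPowerSeriesOnBall h rS 0 (ENNReal.ofReal r1) := by
    refine ⟨hradius, ENNReal.ofReal_pos.2 hr1pos, ?_⟩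
    intro y hy
    have hy' : |y| < r1 := by
      rw [EMetric.mem_ball, edist_zero_right, ← ofReal_norm,
        Real.norm_eq_abs] at hy
      exact (ENNReal.ofReal_lt_ofReal_iff hr1pos).1 hy
    have scc : Summable fun n : ℕ => y ^ n • c n := hsumc y (lt_trans hy' hr1R)
    have htsum : h (0 + y) = ∑' n : ℕ, y ^ n • c n := by
      rw [zero_add, hh]
      have hsplit := Summable.sum_add_tsum_nat_add (f := fun n : ℕ => y ^ n • c n) t scc
      have hz : (∑ i ∈ Finset.range t, y ^ i • c i) = 0 := by
        apply Finset.sum_eq_zero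
        intro i hi
        rw [hc]
        simp [Nat.not_le.2 (Finset.mem_range.1 hi)]
      have hcongr : (∑' i : ℕ, y ^ (i + t) • c (i + t)) = ∑' i : ℕ, y ^ (i + t) • a (i + t) := by
        congr 1; funext i; rw [hc]; simp [Nat.le_add_left]
      rw [← hsplit, hz, zero_add, hcongr]
    rw [htsum]
    have heq : (fun n : ℕ => rS n fun _ => y) = fun n : ℕ => y ^ n • c n := by
      funext n
      rw [hrS]
      simp [ContinuousMultilinearMap.mkPiRing_apply]
    rw [heq]
    exact scc.hasSum
  -- the open set
  have hU1 : IsOpen (Metric.ball (0 : ℝ) r1) := Metric.isOpen_ball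
  have hsubset : Set.Icc (0 : ℝ) 1 ⊆ Metric.ball (0 : ℝ) r1 := by
    intro x hx
    rw [Metric.mem_ball, Real.dist_eq, sub_zero]
    have : |x| ≤ 1 := abs_le.mpr ⟨by linarith [hx.1], hx.2⟩
    linarith
  have hanalytic : ∀ x ∈ Metric.ball (0 : ℝ) r1, AnalyticAt ℝ h x := by
    intro x hx
    apply hball.analyticAt_of_mem
    rw [Metric.mem_ball, Real.dist_eq, sub_zero] at hx
    rw [EMetric.mem_ball, edist_zero_right, ← ofReal_norm,
      Real.norm_eq_abs]
    exact (ENNReal.ofReal_lt_ofReal_iff hr1pos).2 hx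
  have hcontdiff : ContDiffOn ℝ t h (Metric.ball (0 : ℝ) r1) :=
    fun x hx => ((hanalytic x hx).contDiffAt).contDiffWithinAt
  -- vanishing derivatives of h at 0
  have hzero : ∀ j, j < t → iteratedDeriv j h 0 = 0 := by
    intro j hj
    have key := hball.factorial_smul (y := (1 : ℝ)) j
    rw [iteratedDeriv_eq_iteratedFDeriv, ← key]
    have hz : rS j (fun _ => (1 : ℝ)) = (0 : E) := by
      rw [hrS]
      simp [ContinuousMultilinearMap.mkPiRing_apply, hc, Nat.not_le.2 hj]
    rw [hz, smul_zero]
  -- the polynomial part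
  set P : ℝ → E := fun θ => ∑ j ∈ Finset.range t, θ ^ j • a j with hP
  have hPc : ContDiff ℝ t P :=
    ContDiff.sum fun j _ => (contDiff_id.pow j).smul contDiff_const
  have hgPh : ∀ θ ∈ Metric.ball (0 : ℝ) r1, F (s * θ) = (h + P) θ := by
    intro θ hθ
    rw [Metric.mem_ball, Real.dist_eq, sub_zero] at hθ
    have hθR : |s * θ| < R := by
      rw [abs_mul, abs_of_pos hs]
      calc s * |θ| < s * (R / s) := (mul_lt_mul_iff_right₀ hs).2 (lt_trans hθ hr1R)
        _ = R := by field_simp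
    rw [hF _ hθR]
    have hcongr : (fun k : ℕ => (s * θ) ^ k • f k) = fun k : ℕ => θ ^ k • a k := by
      funext k; rw [ha, mul_pow, smul_smul, mul_comm]
    rw [hcongr]
    have hsθ : Summable fun k : ℕ => θ ^ k • a k := hsum θ (lt_trans hθ hr1R)
    rw [← Summable.sum_add_tsum_nat_add (f := fun k : ℕ => θ ^ k • a k) t hsθ]
    show _ = h θ + P θ
    rw [hh, hP]
    exact add_comm _ _
  -- the t-th derivative of h is bounded by M on [0,1]
  have hbnd : ∀ x ∈ Set.Icc (0 : ℝ) 1, ‖iteratedDeriv t h x‖ ≤ M := by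
    intro x hx
    have hxball := hsubset hx
    have hPz : iteratedDeriv t P = fun _ => 0 :=
      sparsto_iteratedDeriv_poly a t t le_rfl
    have e1 : iteratedDerivWithin t (h + P) (Metric.ball (0 : ℝ) r1) x
        = iteratedDerivWithin t h (Metric.ball (0 : ℝ) r1) x
          + iteratedDerivWithin t P (Metric.ball (0 : ℝ) r1) x :=
      iteratedDerivWithin_add hxball hU1.uniqueDiffOn (hcontdiff x hxball) hPc.contDiffWithinAt
    have hEq : Set.EqOn (h + P) (fun θ' => F (s * θ')) (Metric.ball (0 : ℝ) r1) :=
      fun θ hθ => (hgPh θ hθ).symm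
    have e2 : iteratedDerivWithin t (h + P) (Metric.ball (0 : ℝ) r1) x
        = iteratedDerivWithin t (fun θ' => F (s * θ')) (Metric.ball (0 : ℝ) r1) x :=
      iteratedDerivWithin_congr hEq hxball
    have e3 : iteratedDeriv t h x = iteratedDeriv t (fun θ' => F (s * θ')) x := by
      have := e1.symm.trans e2
      rw [sparsto_iteratedDerivWithin_of_isOpen hU1 hxball,
        sparsto_iteratedDerivWithin_of_isOpen hU1 hxball,
        sparsto_iteratedDerivWithin_of_isOpen hU1 hxball] at this
      rw [hPz] at this
      simpa using this
    rw [e3]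
    exact hbound x hx
  have final := sparsto_key hU1 hsubset M t h hcontdiff hzero hbnd 1 (by norm_num)
  have h1 : h 1 = ∑' k : ℕ, s ^ (k + t) • f (k + t) := by
    rw [hh]; simp [ha]
  rw [← h1]
  simpa using final
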